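/- For x > 0, 0 < a < 1, β > 0 and 0 < α < 1, the jump density of the CTS-OU compound Poisson part satisfies f_J(x) = (α x^{-α-1}/(β^α (a^{-α}-1) Γ(1-α))) (e^{-βx} - e^{-βx/a}) = ∫₁^{1/a} [(βv)^{1-α} x^{-α} e^{-βvx} / Γ(1-α)] · (α/(a^{-α}-1)) v^{α-1} dv, exhibiting f_J as a mixture of Gamma(1-α, βv) densities with mixing density (α/(a^{-α}-1)) v^{α-1} on [1,1/a]. -/

import Mathlib

open MeasureTheory Real

lemma integral_exp_mul_real {c p q : ℝ} (hc : c ≠ 0) :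
    ∫ v in p..q, Real.exp (c * v) = (Real.exp (c * q) - Real.exp (c * p)) / c := by
  have D : ∀ y : ℝ, HasDerivAt (fun y : ℝ => Real.exp (c * y) / c) (Real.exp (c * y)) y := by
    intro y
    have : HasDerivAt (fun y : ℝ => Real.exp (c * y)) (Real.exp (c * y) * c) y := by
      simpa [Function.comp_def] using (Real.hasDerivAt_exp (c * y)).comp y ((hasDerivAt_id y).const_mul c)
    simpa [mul_div_assoc, mul_div_cancel_right₀ _ hc] using this.div_const c
  rw [intervalIntegral.integral_eq_sub_of_hasDerivAt (fun y _ => D y)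
    (Continuous.intervalIntegrable (by continuity) p q)]
  ring

theorem stmt_15 (x a β α : ℝ) (hx : 0 < x) (ha0 : 0 < a) (ha1 : a < 1)
    (hβ : 0 < β) (hα0 : 0 < α) (hα1 : α < 1) :
    α * x ^ (-α - 1) / (β ^ α * (a ^ (-α) - 1) * Real.Gamma (1 - α))
        * (Real.exp (-β * x) - Real.exp (-β * x / a))
      = ∫ v in (1:ℝ)..(1/a),
          (β * v) ^ (1 - α) * x ^ (-α) * Real.exp (-β * v * x) / Real.Gamma (1 - α)
            * (α / (a ^ (-α) - 1) * v ^ (α - 1)) := by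
  have ha1' : (1:ℝ) < 1 / a := (one_lt_div ha0).mpr ha1
  have hG : Real.Gamma (1 - α) ≠ 0 := ne_of_gt (Real.Gamma_pos_of_pos (by linarith))
  have haα : a ^ (-α) - 1 ≠ 0 := by
    have : (1:ℝ) < a ^ (-α) := by
      rw [Real.rpow_neg ha0.le, one_lt_inv_iff₀]
      exact ⟨by positivity, Real.rpow_lt_one ha0.le ha1 hα0⟩
    linarith
  -- rewrite integrand on the interval
  have hcongr : (∫ v in (1:ℝ)..(1/a),
          (β * v) ^ (1 - α) * x ^ (-α) * Real.exp (-β * v * x) / Real.Gamma (1 - α)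
            * (α / (a ^ (-α) - 1) * v ^ (α - 1)))
      = ∫ v in (1:ℝ)..(1/a),
          (β ^ (1 - α) * x ^ (-α) / Real.Gamma (1 - α) * (α / (a ^ (-α) - 1)))
            * Real.exp ((-(β * x)) * v) := by
    apply intervalIntegral.integral_congr
    intro v hv
    have hv1 : (1:ℝ) ≤ v := by
      rw [Set.uIcc_of_le ha1'.le] at hv
      rcases hv with ⟨h1, h2⟩
      exact h1
    have hv0 : 0 < v := lt_of_lt_of_le one_pos hv1
    have h1 : (β * v) ^ (1 - α) = β ^ (1 - α) * v ^ (1 - α) :=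
      Real.mul_rpow hβ.le hv0.le
    have h2 : v ^ (1 - α) * v ^ (α - 1) = 1 := by
      rw [← Real.rpow_add hv0]; norm_num
    have h3 : -β * v * x = -(β * x) * v := by ring
    simp only []
    rw [h1, h3]
    linear_combination (β ^ (1 - α) * x ^ (-α) * Real.exp (-(β * x) * v) / Real.Gamma (1 - α)
      * (α / (a ^ (-α) - 1))) * h2
  rw [hcongr, intervalIntegral.integral_const_mul,
    integral_exp_mul_real (c := -(β * x)) (by nlinarith)]
  have hb : β ^ (1 - α) = β / β ^ α := by
    rw [Real.rpow_sub hβ, Real.rpow_one]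
  have hxs : x ^ (-α - 1) = x ^ (-α) / x := by
    rw [show -α - 1 = -α + (-1) by ring, Real.rpow_add hx, Real.rpow_neg_one, div_eq_mul_inv]
  have he1 : -(β * x) * 1 = -β * x := by ring
  have he2 : -(β * x) * (1 / a) = -β * x / a := by ring
  rw [hb, hxs, he1, he2]
  have hxa : x ^ (-α) ≠ 0 := by positivity
  have hba : β ^ α ≠ 0 := by positivity
  field_simp
  ring
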